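/- arXiv:2502.00184 — 2 statements merged into one kernel-verified Lean document; each statement's English description precedes it below -/
import Mathlib

section
/- Let u : Ω → ℝ be bounded on a bounded open set Ω ⊆ ℝⁿ and let u_ε be its sup-convolution with exponent q ≥ 2. Then u_ε is semi-convex: there exists a constant c > 0, depending on ε, q, and sup_Ω u - inf_Ω u, such that the function x ↦ u_ε(x) + c|x|² is convex on the set Ω_{r(ε)} = {x ∈ Ω : dist(x, ∂Ω) > r(ε)}, where r(ε) = (q ε^{q-1} (sup_Ω u - inf_Ω u))^{1/q}. -/
open Set Metric

section aux
variable {E : Type*} [NormedAddCommGroup E] [InnerProductSpace ℝ E]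

lemma norm_combo_sq (a b : E) (t s : ℝ) (hts : t + s = 1) :
    ‖t•a + s•b‖^2 = t*‖a‖^2 + s*‖b‖^2 - t*s*‖a-b‖^2 := by
  have hs : s = 1 - t := by linarith
  subst hs
  simp only [← real_inner_self_eq_norm_sq]
  simp only [inner_add_left, inner_add_right, inner_sub_left, inner_sub_right,
    real_inner_smul_left, real_inner_smul_right, real_inner_comm a b]
  ring

lemma quad_conv (c c' : ℝ) (h : c' ≤ c) (y : E) (S : Set E) (hS : Convex ℝ S) :
    ConvexOn ℝ S (fun x => c * ‖x‖^2 - c' * ‖x - y‖^2) := by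
  refine ⟨hS, fun a ha b hb t s ht hs hts => ?_⟩
  have h1 := norm_combo_sq a b t s hts
  have h2 : ‖t•a + s•b - y‖^2 = t*‖a-y‖^2 + s*‖b-y‖^2 - t*s*‖a-b‖^2 := by
    have h3 := norm_combo_sq (a - y) (b - y) t s hts
    have h4 : t•(a-y) + s•(b-y) = t•a + s•b - y := by
      rw [smul_sub, smul_sub, sub_add_sub_comm, ← add_smul, hts, one_smul]
    have h5 : (a - y) - (b - y) = a - b := by abel
    rw [h4, h5] at h3
    exact h3
  simp only [smul_eq_mul]
  rw [h1, h2]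
  nlinarith [mul_nonneg (mul_nonneg (mul_nonneg ht hs) (sub_nonneg.2 h)) (sq_nonneg ‖a-b‖)]

end aux

lemma phi_props (C q c' D : ℝ) (hC : 0 ≤ C) (hq : 2 ≤ q)
    (h1 : ∀ t ∈ Ioo (0:ℝ) D, C*q*(q-1)*t^(q-2) ≤ 2*c') :
    ConvexOn ℝ (Icc 0 D) (fun t => c'*t^2 - C*t^q) ∧
    MonotoneOn (fun t => c'*t^2 - C*t^q) (Icc 0 D) := by
  have hcont : ContinuousOn (fun t : ℝ => c'*t^2 - C*t^q) (Icc 0 D) := by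
    have : Continuous fun t : ℝ => c'*t^2 - C*t^q :=
      ((continuous_const.mul (continuous_pow 2)).sub
        (continuous_const.mul (Real.continuous_rpow_const (by linarith))))
    exact this.continuousOn
  have hder : ∀ x ∈ Ioo (0:ℝ) D,
      HasDerivAt (fun t : ℝ => c'*t^2 - C*t^q) (2*c'*x - C*(q*x^(q-1))) x := by
    intro x hx
    have hp : HasDerivAt (fun t : ℝ => t^(2:ℕ)) (2*x) x := by
      simpa using hasDerivAt_pow 2 x
    have hr : HasDerivAt (fun t : ℝ => t^q) (q*x^(q-1)) x :=
      Real.hasDerivAt_rpow_const (Or.inl hx.1.ne')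
    have := ((hp.const_mul c').sub (hr.const_mul C))
    refine this.congr_deriv ?_
    ring
  have hder' : ∀ x ∈ Ioo (0:ℝ) D,
      HasDerivAt (fun t : ℝ => 2*c'*t - C*(q*t^(q-1))) (2*c' - C*(q*((q-1)*x^(q-2)))) x := by
    intro x hx
    have hi : HasDerivAt (fun t : ℝ => t) (1:ℝ) x := hasDerivAt_id x
    have hr : HasDerivAt (fun t : ℝ => t^(q-1)) ((q-1)*x^(q-1-1)) x :=
      Real.hasDerivAt_rpow_const (Or.inl hx.1.ne')
    have h2 : (q-1-1) = q-2 := by ring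
    rw [h2] at hr
    have := ((hi.const_mul (2*c')).sub ((hr.const_mul q).const_mul C))
    refine this.congr_deriv ?_
    ring
  have hder_nonneg : ∀ x ∈ Ioo (0:ℝ) D, 0 ≤ 2*c'*x - C*(q*x^(q-1)) := by
    intro x hx
    have hxq : x^(q-1) = x^(q-2)*x := by
      rw [show q-1 = q-2+1 by ring, Real.rpow_add_one hx.1.ne']
    have hP : 0 ≤ x^(q-2) := Real.rpow_nonneg hx.1.le _
    have := h1 x hx
    rw [hxq]
    nlinarith [mul_le_mul_of_nonneg_right (h1 x hx) hx.1.le,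
      mul_nonneg (mul_nonneg (mul_nonneg hC (by linarith : (0:ℝ) ≤ q)) hP) hx.1.le,
      mul_nonneg (mul_nonneg (mul_nonneg (mul_nonneg hC (by linarith : (0:ℝ) ≤ q))
        (by linarith : (0:ℝ) ≤ q - 2)) hP) hx.1.le]
  constructor
  · refine convexOn_of_hasDerivWithinAt2_nonneg (convex_Icc 0 D) hcont
      (f' := fun x => 2*c'*x - C*(q*x^(q-1)))
      (f'' := fun x => 2*c' - C*(q*((q-1)*x^(q-2)))) ?_ ?_ ?_
    · intro x hx
      rw [interior_Icc] at hx
      exact (hder x hx).hasDerivWithinAt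
    · intro x hx
      rw [interior_Icc] at hx
      exact (hder' x hx).hasDerivWithinAt
    · intro x hx
      rw [interior_Icc] at hx
      have := h1 x hx
      show 0 ≤ 2*c' - C*(q*((q-1)*x^(q-2)))
      nlinarith [this]
  · refine monotoneOn_of_deriv_nonneg (convex_Icc 0 D) hcont ?_ ?_
    · intro x hx
      rw [interior_Icc] at hx
      exact (hder x hx).differentiableAt.differentiableWithinAt
    · intro x hx
      rw [interior_Icc] at hx
      rw [(hder x hx).deriv]
      exact hder_nonneg x hx

/-- Sup-convolutions are semi-convex: `u_ε + c|·|²` is convex on the inner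
parallel set `Ω_{r(ε)}`, for a suitable `c > 0`. -/
theorem supConvolution_semiconvex
    (n : ℕ) (Ω : Set (EuclideanSpace ℝ (Fin n)))
    (hne : Ω.Nonempty) (hbdd : Bornology.IsBounded Ω) (hopen : IsOpen Ω)
    (u : EuclideanSpace ℝ (Fin n) → ℝ)
    (hub : ∃ M : ℝ, ∀ x ∈ Ω, |u x| ≤ M)
    (q : ℝ) (hq : 2 ≤ q) (ε : ℝ) (hε : 0 < ε)
    (uε : EuclideanSpace ℝ (Fin n) → ℝ)
    (huε : ∀ x, uε x = sSup {v : ℝ | ∃ y ∈ Ω,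
      v = u y - (1 / (q * ε ^ (q-1))) * ‖x - y‖ ^ q})
    (r : ℝ)
    (hr : r = (q * ε ^ (q-1) * (sSup (u '' Ω) - sInf (u '' Ω))) ^ (1/q)) :
    ∃ c > (0:ℝ), ∀ S : Set (EuclideanSpace ℝ (Fin n)), Convex ℝ S →
      S ⊆ {x ∈ Ω | r < infDist x (frontier Ω)} →
      ConvexOn ℝ S (fun x => uε x + c * ‖x‖ ^ 2) := by
  obtain ⟨M, hM⟩ := hub
  obtain ⟨D, hD⟩ := Metric.isBounded_iff.1 hbdd
  obtain ⟨y0, hy0⟩ := hne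
  have hD0 : 0 ≤ D := by simpa using hD hy0 hy0
  set C : ℝ := 1 / (q * ε ^ (q-1)) with hCdef
  have hC : 0 < C := by
    have h1 : (0:ℝ) < ε ^ (q-1) := Real.rpow_pos_of_pos hε _
    have h2 : (0:ℝ) < q := by linarith
    positivity
  set c' : ℝ := C * q * q * (1+D) ^ q with hc'def
  have hc'0 : 0 ≤ c' := by
    have : (0:ℝ) ≤ (1+D) ^ q := Real.rpow_nonneg (by linarith) _
    have h2 : (0:ℝ) < q := by linarith
    positivity
  have h1 : ∀ t ∈ Ioo (0:ℝ) D, C*q*(q-1)*t^(q-2) ≤ 2*c' := by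
    intro t ht
    have e1 : t ^ (q-2) ≤ (1+D) ^ (q-2) :=
      Real.rpow_le_rpow ht.1.le (by linarith [ht.2]) (by linarith)
    have e2 : (1+D) ^ (q-2) ≤ (1+D) ^ q :=
      Real.rpow_le_rpow_of_exponent_le (by linarith) (by linarith)
    have e3 : (0:ℝ) ≤ C * q := by positivity
    have e4 : C*q*(q-1)*t^(q-2) ≤ C*q*(q-1)*(1+D)^q := by
      have : (0:ℝ) ≤ C*q*(q-1) := by nlinarith
      nlinarith
    have e5 : C*q*(q-1)*(1+D)^q ≤ C*q*q*(1+D)^q := by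
      have : (0:ℝ) ≤ (1+D) ^ q := Real.rpow_nonneg (by linarith) _
      nlinarith
    rw [hc'def]
    linarith
  obtain ⟨hφconv, hφmono⟩ := phi_props C q c' D hC.le hq h1
  refine ⟨c' + 1, by positivity, fun S hS hSsub => ?_⟩
  have hSΩ : S ⊆ Ω := fun x hx => (hSsub hx).1
  -- the set defining uε x is nonempty and bounded above
  have hsetne : ∀ x : EuclideanSpace ℝ (Fin n),
      {v : ℝ | ∃ y ∈ Ω, v = u y - C * ‖x - y‖ ^ q}.Nonempty :=
    fun x => ⟨u y0 - C * ‖x - y0‖ ^ q, y0, hy0, rfl⟩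
  have hsetbdd : ∀ x : EuclideanSpace ℝ (Fin n),
      BddAbove {v : ℝ | ∃ y ∈ Ω, v = u y - C * ‖x - y‖ ^ q} := by
    intro x
    refine ⟨M, fun v hv => ?_⟩
    obtain ⟨y, hy, rfl⟩ := hv
    have h1 : 0 ≤ C * ‖x - y‖ ^ q :=
      mul_nonneg hC.le (Real.rpow_nonneg (norm_nonneg _) _)
    have := (abs_le.1 (hM y hy)).2
    linarith
  -- each y gives a convex function
  have key : ∀ y ∈ Ω, ConvexOn ℝ S
      (fun x => u y - C * ‖x - y‖ ^ q + (c'+1) * ‖x‖ ^ 2) := by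
    intro y hy
    have himg : (fun x : EuclideanSpace ℝ (Fin n) => ‖x - y‖) '' S ⊆ Icc 0 D := by
      rintro t ⟨x, hx, rfl⟩
      refine ⟨norm_nonneg _, ?_⟩
      have := hD (hSΩ hx) hy
      rwa [dist_eq_norm] at this
    have hconvimg : Convex ℝ ((fun x : EuclideanSpace ℝ (Fin n) => ‖x - y‖) '' S) := by
      apply IsPreconnected.convex
      exact (hS.isPreconnected).image _
        ((continuous_id.sub continuous_const).norm.continuousOn)
    have hfconv : ConvexOn ℝ S (fun x : EuclideanSpace ℝ (Fin n) => ‖x - y‖) := by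
      have := convexOn_dist y hS
      simpa only [dist_eq_norm] using this
    have hcomp : ConvexOn ℝ S
        ((fun t : ℝ => c'*t^2 - C*t^q) ∘ (fun x : EuclideanSpace ℝ (Fin n) => ‖x - y‖)) :=
      ConvexOn.comp (hφconv.subset himg hconvimg) hfconv (hφmono.mono himg)
    have hquad : ConvexOn ℝ S
        (fun x : EuclideanSpace ℝ (Fin n) => (c'+1) * ‖x‖^2 - c' * ‖x - y‖^2) :=
      quad_conv (c'+1) c' (by linarith) y S hS
    have := (hcomp.add hquad).add (convexOn_const (u y) hS)
    refine ConvexOn.congr this (fun x _ => ?_)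
    simp only [Function.comp_apply, Pi.add_apply]
    ring
  -- conclude via sup
  refine ⟨hS, fun a ha b hb t s ht hs hts => ?_⟩
  simp only [smul_eq_mul]
  have hmain : sSup {v : ℝ | ∃ y ∈ Ω, v = u y - C * ‖t•a + s•b - y‖ ^ q}
      ≤ t * (uε a + (c'+1) * ‖a‖ ^ 2) + s * (uε b + (c'+1) * ‖b‖ ^ 2)
        - (c'+1) * ‖t•a + s•b‖ ^ 2 := by
    refine csSup_le (hsetne _) ?_
    rintro v ⟨w, hw, rfl⟩
    have hkey := (key w hw).2 ha hb ht hs hts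
    simp only [smul_eq_mul] at hkey
    have ha' : u w - C * ‖a - w‖ ^ q ≤ uε a := by
      rw [huε a]; exact le_csSup (hsetbdd a) ⟨w, hw, rfl⟩
    have hb' : u w - C * ‖b - w‖ ^ q ≤ uε b := by
      rw [huε b]; exact le_csSup (hsetbdd b) ⟨w, hw, rfl⟩
    have ha'' : t * (u w - C * ‖a - w‖ ^ q + (c'+1) * ‖a‖ ^ 2)
        ≤ t * (uε a + (c'+1) * ‖a‖ ^ 2) :=
      mul_le_mul_of_nonneg_left (by linarith) ht
    have hb'' : s * (u w - C * ‖b - w‖ ^ q + (c'+1) * ‖b‖ ^ 2)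
        ≤ s * (uε b + (c'+1) * ‖b‖ ^ 2) :=
      mul_le_mul_of_nonneg_left (by linarith) hs
    linarith
  rw [huε (t•a + s•b)]
  linarith
end

section
/- Let p > 1, λ₀, λ₁ ∈ ℝ, t ∈ (0,1), and λ_t = (1-t)λ₀ + tλ₁. Let u₀, u₁ be positive C² functions near x̄₀, x̄₁ with ∇u₀(x̄₀)/u₀(x̄₀) = ∇u₁(x̄₁)/u₁(x̄₁) = θ ≠ 0, satisfying at those points the equations -div(|∇uᵢ|^{p-2}∇uᵢ) + ⟨x̄ᵢ, ∇uᵢ⟩|∇uᵢ|^{p-2} = λᵢ uᵢ^{p-1} for i = 0,1. Set x̄ = (1-t)x̄₀ + tx̄₁ and ψ(x) = u₀(x - x̄ + x̄₀)^{1-t} u₁(x - x̄ + x̄₁)^t. Then -div(|∇ψ|^{p-2}∇ψ)(x̄) + ⟨x̄, ∇ψ(x̄)⟩|∇ψ(x̄)|^{p-2} ≤ λ_t ψ(x̄)^{p-1}. -/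
open Set Filter InnerProductSpace

noncomputable section BMaux

variable {n : ℕ}

local notation "E" => EuclideanSpace ℝ (Fin n)

lemma fderiv_apply_eq_inner_gradient (f : E → ℝ) (x v : E) :
    fderiv ℝ f x v = inner ℝ (gradient f x) v := by
  rw [gradient]; exact (toDual_symm_apply).symm

lemma gradient_contDiffAt {f : E → ℝ} {x : E} (hf : ContDiffAt ℝ 2 f x) :
    ContDiffAt ℝ 1 (gradient f) x := by
  have h1 : ContDiffAt ℝ 1 (fderiv ℝ f) x := hf.fderiv_right (by norm_num)
  exact ((toDual ℝ E).symm.contDiff.contDiffAt).comp x h1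

/-- `v ↦ ‖v‖^(p-2) • v`. -/
def Hm (p : ℝ) : E → E := fun v => ‖v‖ ^ (p-2) • v

/-- logarithmic gradient field -/
def Vf (u : E → ℝ) : E → E := fun y => (u y)⁻¹ • gradient u y

lemma Hm_diff {p : ℝ} {θ : E} (hθ : θ ≠ 0) : DifferentiableAt ℝ (Hm (n := n) p) θ := by
  have h1 : DifferentiableAt ℝ (fun v : E => ‖v‖ ^ (p-2)) θ :=
    ((differentiableAt_id (𝕜 := ℝ)).norm ℝ hθ).rpow_const (Or.inl (norm_ne_zero_iff.2 hθ))
  exact h1.smul differentiableAt_id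

lemma Vf_diff {u : E → ℝ} {x : E} (hu : ContDiffAt ℝ 2 u x) (hx : u x ≠ 0) :
    DifferentiableAt ℝ (Vf u) x :=
  ((hu.differentiableAt (by norm_num)).inv hx).smul
    ((gradient_contDiffAt hu).differentiableAt one_ne_zero)

lemma Vf_eq_theta {u : E → ℝ} {x θ : E} (hx : u x ≠ 0) (hgrad : gradient u x = u x • θ) :
    Vf u x = θ := by
  simp [Vf, hgrad, smul_smul, inv_mul_cancel₀ hx]

lemma rpow_sub_two_mul_self {a : ℝ} (ha : 0 < a) (p : ℝ) : a ^ (p-2) * a = a ^ (p-1) := by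
  nth_rewrite 2 [← Real.rpow_one a]
  rw [← Real.rpow_add ha]; congr 1; ring

lemma rpow_mul_inv_self {a : ℝ} (ha : 0 < a) (s : ℝ) : a ^ s * a⁻¹ = a ^ (s-1) := by
  rw [← Real.rpow_neg_one a, ← Real.rpow_add ha]
  ring_nf

lemma divF_eq {p : ℝ} (hp : 1 < p) {u : E → ℝ} {x θ : E}
    (hpos : ∀ᶠ y in nhds x, 0 < u y) (hu : ContDiffAt ℝ 2 u x)
    (hθ : θ ≠ 0) (hgrad : gradient u x = u x • θ) :
    (∑ i, fderiv ℝ (fun y => ‖gradient u y‖ ^ (p-2) • gradient u y) x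
        (EuclideanSpace.single i 1) i)
      = (p-1) * u x ^ (p-1) * ‖θ‖ ^ p
        + u x ^ (p-1) * ∑ i, (fderiv ℝ (Hm p) θ)
            ((fderiv ℝ (Vf u) x) (EuclideanSpace.single i 1)) i := by
  have hux : 0 < u x := hpos.self_of_nhds
  have hud : DifferentiableAt ℝ u x := hu.differentiableAt (by norm_num)
  have hVd : DifferentiableAt ℝ (Vf u) x := Vf_diff hu hux.ne'
  have hVx : Vf u x = θ := Vf_eq_theta hux.ne' hgrad
  have hHd : DifferentiableAt ℝ (Hm (n := n) p) θ := Hm_diff hθ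
  have hHd' : DifferentiableAt ℝ (Hm (n := n) p) (Vf u x) := hVx ▸ hHd
  have heq : (fun y => ‖gradient u y‖ ^ (p-2) • gradient u y)
      =ᶠ[nhds x] fun y => (u y) ^ (p-1) • Hm p (Vf u y) := by
    filter_upwards [hpos] with y hy
    have hgr : gradient u y = u y • Vf u y := by
      simp [Vf, smul_smul, mul_inv_cancel₀ hy.ne']
    rw [hgr, Hm]
    rw [norm_smul, Real.norm_of_nonneg hy.le, Real.mul_rpow hy.le (norm_nonneg _),
      smul_smul, smul_smul]
    congr 1
    rw [mul_right_comm, rpow_sub_two_mul_self hy]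
  have hc : DifferentiableAt ℝ (fun y => u y ^ (p-1)) x := hud.rpow_const (Or.inl hux.ne')
  have hHV : DifferentiableAt ℝ (fun y => Hm p (Vf u y)) x := hHd'.comp x hVd
  have hfd : fderiv ℝ (fun y => ‖gradient u y‖ ^ (p-2) • gradient u y) x
      = fderiv ℝ (fun y => (u y) ^ (p-1) • Hm p (Vf u y)) x := heq.fderiv_eq
  have hsmul : fderiv ℝ (fun y => (u y) ^ (p-1) • Hm p (Vf u y)) x
      = (u x ^ (p-1)) • fderiv ℝ (fun y => Hm p (Vf u y)) x
        + (fderiv ℝ (fun y => u y ^ (p-1)) x).smulRight (Hm p (Vf u x)) :=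
    fderiv_smul hc hHV
  have hcomp : fderiv ℝ (fun y => Hm p (Vf u y)) x
      = (fderiv ℝ (Hm p) θ).comp (fderiv ℝ (Vf u) x) := by
    rw [← hVx]
    exact fderiv_comp x hHd' hVd
  have hrpow : fderiv ℝ (fun y => u y ^ (p-1)) x
      = ((p-1) * u x ^ (p-1-1)) • fderiv ℝ u x :=
    (hud.hasFDerivAt.rpow_const (Or.inl hux.ne')).fderiv
  rw [hfd, hsmul, hcomp, hrpow]
  have hθnorm : (0:ℝ) < ‖θ‖ := norm_pos_iff.2 hθ
  have key : ∀ i : Fin n,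
      ((u x ^ (p-1)) • ((fderiv ℝ (Hm p) θ).comp (fderiv ℝ (Vf u) x))
        + (((p-1) * u x ^ (p-1-1)) • fderiv ℝ u x).smulRight (Hm p (Vf u x)))
        (EuclideanSpace.single i 1) i
      = u x ^ (p-1) * (fderiv ℝ (Hm p) θ) ((fderiv ℝ (Vf u) x) (EuclideanSpace.single i 1)) i
        + ((p-1) * u x ^ (p-1-1) * (fderiv ℝ u x (EuclideanSpace.single i 1)))
            * (‖θ‖ ^ (p-2) * θ i) := by
    intro i
    rw [ContinuousLinearMap.add_apply, ContinuousLinearMap.smul_apply,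
      ContinuousLinearMap.smulRight_apply, ContinuousLinearMap.smul_apply, hVx, Hm]
    simp only [PiLp.add_apply, PiLp.smul_apply, smul_eq_mul, ContinuousLinearMap.coe_comp',
      Function.comp_apply]
    try ring
  rw [Finset.sum_congr rfl (fun i _ => key i), Finset.sum_add_distrib, ← Finset.mul_sum]
  rw [add_comm]
  congr 1
  have h1 : ∀ i : Fin n, fderiv ℝ u x (EuclideanSpace.single i 1) = gradient u x i := by
    intro i
    rw [fderiv_apply_eq_inner_gradient]
    rw [EuclideanSpace.inner_single_right]; simp
  have hsum : ∑ i, ((p-1) * u x ^ (p-1-1) * (fderiv ℝ u x (EuclideanSpace.single i 1)))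
      * (‖θ‖ ^ (p-2) * θ i)
      = (p-1) * u x ^ (p-1-1) * ‖θ‖ ^ (p-2) * ∑ i, gradient u x i * θ i := by
    rw [Finset.mul_sum]
    exact Finset.sum_congr rfl fun i _ => by rw [h1 i]; ring
  rw [hsum]
  have hinner : ∑ i, gradient u x i * θ i = u x * ‖θ‖ ^ (2:ℕ) := by
    have : (inner ℝ (gradient u x) θ : ℝ) = ∑ i, gradient u x i * θ i := by
      rw [PiLp.inner_apply]; simp [RCLike.inner_apply]
      exact Finset.sum_congr rfl fun i _ => mul_comm _ _
    rw [← this, hgrad, real_inner_smul_left, real_inner_self_eq_norm_sq]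
    try ring
  rw [hinner]
  have hns : ‖θ‖ ^ (p-2) * ‖θ‖ ^ (2:ℕ) = ‖θ‖ ^ p := by
    rw [← Real.rpow_natCast ‖θ‖ 2, ← Real.rpow_add hθnorm]
    norm_num
  have hus : u x ^ (p-1-1) * u x = u x ^ (p-1) := by
    have := rpow_sub_two_mul_self hux p
    rw [show p - 1 - 1 = p - 2 by ring]
    exact this
  calc (p-1) * u x ^ (p-1-1) * ‖θ‖ ^ (p-2) * (u x * ‖θ‖ ^ (2:ℕ))
      = (p-1) * (u x ^ (p-1-1) * u x) * (‖θ‖ ^ (p-2) * ‖θ‖ ^ (2:ℕ)) := by ring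
    _ = (p-1) * u x ^ (p-1) * ‖θ‖ ^ p := by rw [hns, hus]

lemma psi_hasGradient {t : ℝ} {u₀ u₁ : E → ℝ} {xb xb0 xb1 : E} (x : E)
    (h0 : DifferentiableAt ℝ u₀ (x - xb + xb0)) (hp0 : 0 < u₀ (x - xb + xb0))
    (h1 : DifferentiableAt ℝ u₁ (x - xb + xb1)) (hp1 : 0 < u₁ (x - xb + xb1)) :
    HasGradientAt (fun y => u₀ (y - xb + xb0) ^ (1-t) * u₁ (y - xb + xb1) ^ t)
      ((u₀ (x - xb + xb0) ^ (1-t) * u₁ (x - xb + xb1) ^ t) •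
        ((1-t) • Vf u₀ (x - xb + xb0) + t • Vf u₁ (x - xb + xb1))) x := by
  have hτ0 : HasFDerivAt (fun y : E => y - xb + xb0) (ContinuousLinearMap.id ℝ E) x :=
    ((hasFDerivAt_id x).sub_const xb).add_const xb0
  have hτ1 : HasFDerivAt (fun y : E => y - xb + xb1) (ContinuousLinearMap.id ℝ E) x :=
    ((hasFDerivAt_id x).sub_const xb).add_const xb1
  have hf0 : HasFDerivAt u₀ (toDual ℝ E (gradient u₀ (x - xb + xb0))) (x - xb + xb0) :=
    hasGradientAt_iff_hasFDerivAt.1 h0.hasGradientAt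
  have hf1 : HasFDerivAt u₁ (toDual ℝ E (gradient u₁ (x - xb + xb1))) (x - xb + xb1) :=
    hasGradientAt_iff_hasFDerivAt.1 h1.hasGradientAt
  have hc0 : HasFDerivAt (fun y => u₀ (y - xb + xb0))
      (toDual ℝ E (gradient u₀ (x - xb + xb0))) x := by
    simpa [Function.comp_def] using hf0.comp x hτ0
  have hc1 : HasFDerivAt (fun y => u₁ (y - xb + xb1))
      (toDual ℝ E (gradient u₁ (x - xb + xb1))) x := by
    simpa [Function.comp_def] using hf1.comp x hτ1
  have hr0 := hc0.rpow_const (p := 1 - t) (Or.inl hp0.ne')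
  have hr1 := hc1.rpow_const (p := t) (Or.inl hp1.ne')
  have hm := hr0.mul hr1
  rw [HasGradientAt, HasGradientAtFilter]
  set f := u₀ (x - xb + xb0)
  set g := u₁ (x - xb + xb1)
  set Gf := gradient u₀ (x - xb + xb0)
  set Gg := gradient u₁ (x - xb + xb1)
  have key : toDual ℝ E
        ((f ^ (1-t) * g ^ t) • ((1-t) • Vf u₀ (x - xb + xb0) + t • Vf u₁ (x - xb + xb1)))
      = f ^ (1-t) • ((t * g ^ (t-1)) • toDual ℝ E Gg)
        + g ^ t • ((1-t) * f ^ (1-t-1)) • toDual ℝ E Gf := by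
    apply (toDual ℝ E).symm.injective
    simp only [map_add, map_smul, LinearIsometryEquiv.symm_apply_apply]
    have hVf : Vf u₀ (x - xb + xb0) = f⁻¹ • Gf := rfl
    have hVg : Vf u₁ (x - xb + xb1) = g⁻¹ • Gg := rfl
    rw [hVf, hVg]
    have e0 : f ^ (1-t) * f⁻¹ = f ^ (1-t-1) := rpow_mul_inv_self hp0 _
    have e1 : g ^ t * g⁻¹ = g ^ (t-1) := rpow_mul_inv_self hp1 _
    simp only [smul_add, smul_smul]
    rw [add_comm]
    congr 1
    · congr 1; rw [← e1]; ring
    · congr 1; rw [← e0]; ring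
  rw [key]
  exact hm

end BMaux

open Set Filter

/-- Key pointwise computation for the Brunn–Minkowski inequality: the geometric
mean `ψ` of two eigenfunction-like functions is a subsolution at `x̄`. -/
theorem geometric_mean_subsolution_pointwise
    (n : ℕ) (p lam0 lam1 t : ℝ) (hp : 1 < p) (ht : t ∈ Set.Ioo (0:ℝ) 1)
    (u₀ u₁ : EuclideanSpace ℝ (Fin n) → ℝ)
    (xb0 xb1 xb θ : EuclideanSpace ℝ (Fin n))
    (hxb : xb = (1-t) • xb0 + t • xb1)
    (hC₀ : ∀ᶠ y in nhds xb0, 0 < u₀ y) (hC₁ : ∀ᶠ y in nhds xb1, 0 < u₁ y)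
    (hu₀ : ContDiffAt ℝ 2 u₀ xb0) (hu₁ : ContDiffAt ℝ 2 u₁ xb1)
    (hθ : θ ≠ 0)
    (hθ₀ : gradient u₀ xb0 = u₀ xb0 • θ) (hθ₁ : gradient u₁ xb1 = u₁ xb1 • θ)
    (hPDE₀ :
      -(∑ i, fderiv ℝ (fun y => (‖gradient u₀ y‖ ^ (p-2)) • gradient u₀ y) xb0
          (EuclideanSpace.single i 1) i)
        + (inner ℝ xb0 (gradient u₀ xb0) : ℝ) * ‖gradient u₀ xb0‖ ^ (p-2)
      = lam0 * u₀ xb0 ^ (p-1))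
    (hPDE₁ :
      -(∑ i, fderiv ℝ (fun y => (‖gradient u₁ y‖ ^ (p-2)) • gradient u₁ y) xb1
          (EuclideanSpace.single i 1) i)
        + (inner ℝ xb1 (gradient u₁ xb1) : ℝ) * ‖gradient u₁ xb1‖ ^ (p-2)
      = lam1 * u₁ xb1 ^ (p-1))
    (ψ : EuclideanSpace ℝ (Fin n) → ℝ)
    (hψ : ∀ x, ψ x = u₀ (x - xb + xb0) ^ (1-t) * u₁ (x - xb + xb1) ^ t) :
    -(∑ i, fderiv ℝ (fun y => (‖gradient ψ y‖ ^ (p-2)) • gradient ψ y) xb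
        (EuclideanSpace.single i 1) i)
      + (inner ℝ xb (gradient ψ xb) : ℝ) * ‖gradient ψ xb‖ ^ (p-2)
      ≤ ((1-t) * lam0 + t * lam1) * ψ xb ^ (p-1) := by
  obtain ⟨ht0, ht1⟩ := ht
  have hu0x : 0 < u₀ xb0 := hC₀.self_of_nhds
  have hu1x : 0 < u₁ xb1 := hC₁.self_of_nhds
  have hτ0xb : xb - xb + xb0 = xb0 := by abel
  have hτ1xb : xb - xb + xb1 = xb1 := by abel
  -- tendsto of translations
  have htend0 : Filter.Tendsto (fun x : EuclideanSpace ℝ (Fin n) => x - xb + xb0)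
      (nhds xb) (nhds xb0) := by
    have hc : ContinuousAt (fun x : EuclideanSpace ℝ (Fin n) => x - xb + xb0) xb := by fun_prop
    have := hc.tendsto; rwa [hτ0xb] at this
  have htend1 : Filter.Tendsto (fun x : EuclideanSpace ℝ (Fin n) => x - xb + xb1)
      (nhds xb) (nhds xb1) := by
    have hc : ContinuousAt (fun x : EuclideanSpace ℝ (Fin n) => x - xb + xb1) xb := by fun_prop
    have := hc.tendsto; rwa [hτ1xb] at this
  -- eventual regularity and positivity near xb0, xb1
  have hev0 : ∀ᶠ y in nhds xb0, ContDiffAt ℝ 2 u₀ y ∧ 0 < u₀ y :=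
    (hu₀.eventually (by norm_num)).and hC₀
  have hev1 : ∀ᶠ y in nhds xb1, ContDiffAt ℝ 2 u₁ y ∧ 0 < u₁ y :=
    (hu₁.eventually (by norm_num)).and hC₁
  set W : EuclideanSpace ℝ (Fin n) → EuclideanSpace ℝ (Fin n) :=
    fun x => (1-t) • Vf u₀ (x - xb + xb0) + t • Vf u₁ (x - xb + xb1) with hW
  have hψfun : ψ = fun y => u₀ (y - xb + xb0) ^ (1-t) * u₁ (y - xb + xb1) ^ t := funext hψ
  have hev : ∀ᶠ x in nhds xb, HasGradientAt ψ (ψ x • W x) x ∧ 0 < ψ x := by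
    filter_upwards [htend0.eventually hev0, htend1.eventually hev1] with x h0 h1
    have hpos : 0 < ψ x := by
      rw [hψ x]
      exact mul_pos (Real.rpow_pos_of_pos h0.2 _) (Real.rpow_pos_of_pos h1.2 _)
    refine ⟨?_, hpos⟩
    rw [hψfun, hW]
    exact psi_hasGradient x (h0.1.differentiableAt (by norm_num)) h0.2
      (h1.1.differentiableAt (by norm_num)) h1.2
  -- value of W at xb
  have hV0 : Vf u₀ xb0 = θ := Vf_eq_theta hu0x.ne' hθ₀
  have hV1 : Vf u₁ xb1 = θ := Vf_eq_theta hu1x.ne' hθ₁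
  have hWxb : W xb = θ := by
    rw [hW]
    simp only [hτ0xb, hτ1xb, hV0, hV1, ← add_smul]
    norm_num
  have hψpos : 0 < ψ xb := (hev.self_of_nhds).2
  have hgradψ : gradient ψ xb = ψ xb • θ := by
    rw [(hev.self_of_nhds).1.gradient, hWxb]
  -- ψ is C² at xb
  have hcomp0 : ContDiffAt ℝ 2 (fun x : EuclideanSpace ℝ (Fin n) => u₀ (x - xb + xb0)) xb := by
    have hτ : ContDiffAt ℝ 2 (fun x : EuclideanSpace ℝ (Fin n) => x - xb + xb0) xb :=
      (((contDiff_id (𝕜 := ℝ)).sub contDiff_const).add contDiff_const).contDiffAt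
    have h0' : ContDiffAt ℝ 2 u₀ (xb - xb + xb0) := by rw [hτ0xb]; exact hu₀
    exact ContDiffAt.comp xb h0' hτ
  have hcomp1 : ContDiffAt ℝ 2 (fun x : EuclideanSpace ℝ (Fin n) => u₁ (x - xb + xb1)) xb := by
    have hτ : ContDiffAt ℝ 2 (fun x : EuclideanSpace ℝ (Fin n) => x - xb + xb1) xb :=
      (((contDiff_id (𝕜 := ℝ)).sub contDiff_const).add contDiff_const).contDiffAt
    have h1' : ContDiffAt ℝ 2 u₁ (xb - xb + xb1) := by rw [hτ1xb]; exact hu₁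
    exact ContDiffAt.comp xb h1' hτ
  have hψC : ContDiffAt ℝ 2 ψ xb := by
    rw [hψfun]
    exact (hcomp0.rpow_const_of_ne (by rw [hτ0xb]; exact hu0x.ne')).mul
      (hcomp1.rpow_const_of_ne (by rw [hτ1xb]; exact hu1x.ne'))
  -- the divergence formulas
  have hdiv0 := divF_eq hp hC₀ hu₀ hθ hθ₀
  have hdiv1 := divF_eq hp hC₁ hu₁ hθ hθ₁
  have hψposev : ∀ᶠ x in nhds xb, 0 < ψ x := hev.mono fun x h => h.2
  have hdivψ := divF_eq hp hψposev hψC hθ hgradψ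
  -- fderiv of Vf ψ
  have hVψev : Vf ψ =ᶠ[nhds xb] W := by
    filter_upwards [hev] with x h
    have hg : gradient ψ x = ψ x • W x := h.1.gradient
    simp [Vf, hg, smul_smul, inv_mul_cancel₀ h.2.ne']
  have hdV0 : DifferentiableAt ℝ (Vf u₀) xb0 := Vf_diff hu₀ hu0x.ne'
  have hdV1 : DifferentiableAt ℝ (Vf u₁) xb1 := Vf_diff hu₁ hu1x.ne'
  have hτd0 : HasFDerivAt (fun y : EuclideanSpace ℝ (Fin n) => y - xb + xb0)
      (ContinuousLinearMap.id ℝ (EuclideanSpace ℝ (Fin n))) xb :=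
    ((hasFDerivAt_id xb).sub_const xb).add_const xb0
  have hτd1 : HasFDerivAt (fun y : EuclideanSpace ℝ (Fin n) => y - xb + xb1)
      (ContinuousLinearMap.id ℝ (EuclideanSpace ℝ (Fin n))) xb :=
    ((hasFDerivAt_id xb).sub_const xb).add_const xb1
  have hcV0 : HasFDerivAt (fun x : EuclideanSpace ℝ (Fin n) => Vf u₀ (x - xb + xb0))
      (fderiv ℝ (Vf u₀) xb0) xb := by
    have h := (hτ0xb ▸ hdV0.hasFDerivAt).comp xb hτd0
    simpa [Function.comp_def] using h
  have hcV1 : HasFDerivAt (fun x : EuclideanSpace ℝ (Fin n) => Vf u₁ (x - xb + xb1))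
      (fderiv ℝ (Vf u₁) xb1) xb := by
    have h := (hτ1xb ▸ hdV1.hasFDerivAt).comp xb hτd1
    simpa [Function.comp_def] using h
  have hWd : HasFDerivAt W
      ((1-t) • fderiv ℝ (Vf u₀) xb0 + t • fderiv ℝ (Vf u₁) xb1) xb :=
    (hcV0.const_smul (1-t)).add (hcV1.const_smul t)
  have hVψfd : fderiv ℝ (Vf ψ) xb
      = (1-t) • fderiv ℝ (Vf u₀) xb0 + t • fderiv ℝ (Vf u₁) xb1 := by
    rw [hVψev.fderiv_eq, hWd.fderiv]
  -- the trace sum splits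
  set L := fderiv ℝ (Hm (n := n) p) θ with hL
  set S₀ := ∑ i, L ((fderiv ℝ (Vf u₀) xb0) (EuclideanSpace.single i 1)) i with hS0
  set S₁ := ∑ i, L ((fderiv ℝ (Vf u₁) xb1) (EuclideanSpace.single i 1)) i with hS1
  have hsumψ : ∑ i, L ((fderiv ℝ (Vf ψ) xb) (EuclideanSpace.single i 1)) i
      = (1-t) * S₀ + t * S₁ := by
    rw [hS0, hS1, Finset.mul_sum, Finset.mul_sum, ← Finset.sum_add_distrib]
    refine Finset.sum_congr rfl fun i _ => ?_
    rw [hVψfd]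
    rw [ContinuousLinearMap.add_apply, ContinuousLinearMap.smul_apply,
      ContinuousLinearMap.smul_apply, map_add, map_smul, map_smul]
    simp [PiLp.add_apply, PiLp.smul_apply, smul_eq_mul]
  -- normalize the PDEs
  have hnorm0 : ‖gradient u₀ xb0‖ ^ (p-2) = u₀ xb0 ^ (p-2) * ‖θ‖ ^ (p-2) := by
    rw [hθ₀, norm_smul, Real.norm_of_nonneg hu0x.le, Real.mul_rpow hu0x.le (norm_nonneg _)]
  have hnorm1 : ‖gradient u₁ xb1‖ ^ (p-2) = u₁ xb1 ^ (p-2) * ‖θ‖ ^ (p-2) := by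
    rw [hθ₁, norm_smul, Real.norm_of_nonneg hu1x.le, Real.mul_rpow hu1x.le (norm_nonneg _)]
  have hmul0 : u₀ xb0 * u₀ xb0 ^ (p-2) = u₀ xb0 ^ (p-1) := by
    rw [mul_comm]; exact rpow_sub_two_mul_self hu0x p
  have hmul1 : u₁ xb1 * u₁ xb1 ^ (p-2) = u₁ xb1 ^ (p-1) := by
    rw [mul_comm]; exact rpow_sub_two_mul_self hu1x p
  have hP0 : (0:ℝ) < u₀ xb0 ^ (p-1) := Real.rpow_pos_of_pos hu0x _
  have hP1 : (0:ℝ) < u₁ xb1 ^ (p-1) := Real.rpow_pos_of_pos hu1x _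
  have hl0 : lam0 = -((p-1) * ‖θ‖ ^ p) - S₀ + (inner ℝ xb0 θ : ℝ) * ‖θ‖ ^ (p-2) := by
    have h := hPDE₀
    rw [hdiv0, hnorm0, hθ₀, real_inner_smul_right] at h
    have key : u₀ xb0 ^ (p-1) * lam0
        = u₀ xb0 ^ (p-1) * (-((p-1) * ‖θ‖ ^ p) - S₀ + (inner ℝ xb0 θ : ℝ) * ‖θ‖ ^ (p-2)) := by
      rw [show u₀ xb0 ^ (p-1) * lam0 = lam0 * u₀ xb0 ^ (p-1) from mul_comm _ _, ← h, ← hmul0]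
      ring
    exact (mul_left_cancel₀ hP0.ne' key)
  have hl1 : lam1 = -((p-1) * ‖θ‖ ^ p) - S₁ + (inner ℝ xb1 θ : ℝ) * ‖θ‖ ^ (p-2) := by
    have h := hPDE₁
    rw [hdiv1, hnorm1, hθ₁, real_inner_smul_right] at h
    have key : u₁ xb1 ^ (p-1) * lam1
        = u₁ xb1 ^ (p-1) * (-((p-1) * ‖θ‖ ^ p) - S₁ + (inner ℝ xb1 θ : ℝ) * ‖θ‖ ^ (p-2)) := by
      rw [show u₁ xb1 ^ (p-1) * lam1 = lam1 * u₁ xb1 ^ (p-1) from mul_comm _ _, ← h, ← hmul1]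
      ring
    exact (mul_left_cancel₀ hP1.ne' key)
  -- the goal
  have hnormψ : ‖gradient ψ xb‖ ^ (p-2) = ψ xb ^ (p-2) * ‖θ‖ ^ (p-2) := by
    rw [hgradψ, norm_smul, Real.norm_of_nonneg hψpos.le,
      Real.mul_rpow hψpos.le (norm_nonneg _)]
  have hmulψ : ψ xb * ψ xb ^ (p-2) = ψ xb ^ (p-1) := by
    rw [mul_comm]; exact rpow_sub_two_mul_self hψpos p
  have hinnerxb : (inner ℝ xb θ : ℝ) = (1-t) * (inner ℝ xb0 θ : ℝ) + t * (inner ℝ xb1 θ : ℝ) := by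
    rw [hxb, inner_add_left, real_inner_smul_left, real_inner_smul_left]
  apply le_of_eq
  rw [hdivψ, hnormψ, hgradψ, real_inner_smul_right, hsumψ, hl0, hl1, ← hmulψ, hinnerxb]
  ring
end
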